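/- Let k ≥ 2, n, s, t, o be nonnegative integers with o ≥ 2, n = o/2 + t + s (o even), s ≤ t, and n ≥ k−1. Define φ₂ = 6·(4(n−k+1) + (o+2k)·(t−s)) and φ₃ = 6·(2(n−k+1) + 2kn + (o+2)·(t−s) + (k−1)). Then φ₂ < φ₃. -/
import Mathlib

/-- Second comparison of Lemma 3.1(2): `φ₂ < φ₃`. -/
theorem phi2_lt_phi3 (k n s t o : ℕ) (hk : 2 ≤ k) (ho : 2 ≤ o) (hoe : Even o)
    (hn : n = o / 2 + t + s) (hst : s ≤ t) (hnk : (k : ℤ) - 1 ≤ (n : ℤ)) :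
    6 * (4 * ((n : ℤ) - (k : ℤ) + 1) + ((o : ℤ) + 2 * (k : ℤ)) * ((t : ℤ) - (s : ℤ))) <
      6 * (2 * ((n : ℤ) - (k : ℤ) + 1) + 2 * (k : ℤ) * (n : ℤ) +
        ((o : ℤ) + 2) * ((t : ℤ) - (s : ℤ)) + ((k : ℤ) - 1)) := by
  obtain ⟨m, hm⟩ := hoe
  subst hm hn
  have h2 : (m + m) / 2 = m := by omega
  rw [h2]
  have hk' : (2:ℤ) ≤ (k:ℤ) := by exact_mod_cast hk
  have hm' : (1:ℤ) ≤ (m:ℤ) := by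
    have : 1 ≤ m := by omega
    exact_mod_cast this
  have hst' : (s:ℤ) ≤ (t:ℤ) := by exact_mod_cast hst
  have hs : (0:ℤ) ≤ (s:ℤ) := Int.natCast_nonneg s
  push_cast
  nlinarith [mul_nonneg (sub_nonneg.2 hk') hs, mul_nonneg (sub_nonneg.2 hk') (by linarith : (0:ℤ) ≤ (m:ℤ))]
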